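/- Soundness of the two-phase pruning: let D(u) be the set of vertices downward-matching u, and define U(u) top-down by U(root) = D(root) and, for a child u' of u, U(u') = {v' ∈ D(u') : ∃ v ∈ U(u), v ⟶⁺ v'}. Then a vertex v' belongs to U(u') if and only if there exists a partial embedding of the path from the root to u' in the query tree mapping u' to v', every node w on the path to a vertex in D(w), and every consecutive pair to a nonempty path in G. -/

import Mathlib

/-- The top-down pruning sets U, defined by: U(root) = D(root), and for a child u' of u,
U(u') = { v' ∈ D(u') : some v ∈ U(u) reaches v' by a nonempty path }. -/
inductive Upred {Vq V : Type} (child : Vq → Vq → Prop) (D : Vq → Set V)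
    (reach : V → V → Prop) (r : Vq) : Vq → V → Prop
  | base : ∀ v, v ∈ D r → Upred child D reach r r v
  | step : ∀ u u' v v', child u u' → Upred child D reach r u v → v' ∈ D u' →
      reach v v' → Upred child D reach r u' v'

lemma aux16 {Vq V : Type} (child : Vq → Vq → Prop) (D : Vq → Set V)
    (reach : V → V → Prop) (r : Vq) :
    ∀ l : List (Vq × V), ∀ u' v',
      (∃ v0, l.head? = some (r, v0)) →
      l.getLast? = some (u', v') →
      (∀ x ∈ l, x.2 ∈ D x.1) →
      List.Chain' (fun a b => child a.1 b.1 ∧ reach a.2 b.2) l →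
      Upred child D reach r u' v' := by
  intro l
  induction l using List.reverseRecOn with
  | nil => rintro u' v' ⟨v0, h⟩; simp at h
  | append_singleton l a ih =>
    rintro u' v' ⟨v0, hhead⟩ hlast hmem hchain
    rw [List.getLast?_append] at hlast
    simp at hlast
    subst hlast
    rcases l.eq_nil_or_concat with rfl | ⟨l', b, rfl⟩
    · simp at hhead
      obtain ⟨rfl, rfl⟩ := hhead
      exact Upred.base _ (hmem (u', v') (by simp))
    · rw [List.Chain', List.isChain_append] at hchain
      obtain ⟨hc1, _, hlink⟩ := hchain
      have hlb : (l'.concat b).getLast? = some b := by simp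
      have hba := hlink b (by simp [hlb]) (u', v') (by simp)
      have hU : Upred child D reach r b.1 b.2 := by
        apply ih b.1 b.2
        · refine ⟨v0, ?_⟩
          rwa [List.head?_append_of_ne_nil] at hhead
          simp
        · exact hlb
        · intro x hx; exact hmem x (by simp at hx ⊢; tauto)
        · exact hc1
      exact Upred.step b.1 u' b.2 v' hba.1 hU (hmem (u', v') (by simp)) hba.2

theorem stmt16 {Vq V : Type} (child : Vq → Vq → Prop) (D : Vq → Set V)
    (edge : V → V → Prop) (r : Vq) (u' : Vq) (v' : V) :
    Upred child D (Relation.TransGen edge) r u' v' ↔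
      ∃ l : List (Vq × V),
        (∃ v0, l.head? = some (r, v0)) ∧
        l.getLast? = some (u', v') ∧
        (∀ x ∈ l, x.2 ∈ D x.1) ∧
        List.Chain' (fun a b => child a.1 b.1 ∧ Relation.TransGen edge a.2 b.2) l := by
  constructor
  · intro h
    induction h with
    | base v hv => exact ⟨[(r, v)], ⟨v, rfl⟩, rfl, by simpa using hv, List.isChain_singleton _⟩
    | step u u' v v' hc hU hD hr ih =>
      obtain ⟨l, ⟨v0, hhead⟩, hlast, hmem, hchain⟩ := ih
      have hne : l ≠ [] := by rintro rfl; simp at hhead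
      refine ⟨l ++ [(u', v')], ⟨v0, ?_⟩, by simp, ?_, ?_⟩
      · rwa [List.head?_append_of_ne_nil _ hne]
      · intro x hx
        rcases List.mem_append.1 hx with hx | hx
        · exact hmem x hx
        · simp at hx; subst hx; exact hD
      · rw [List.Chain', List.isChain_append]
        refine ⟨hchain, by simp, ?_⟩
        intro x hx y hy
        simp at hy; subst hy
        rw [hlast] at hx
        simp at hx; subst hx
        exact ⟨hc, hr⟩
  · rintro ⟨l, h1, h2, h3, h4⟩
    exact aux16 child D _ r l u' v' h1 h2 h3 h4
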